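/- Let f_n(t,v_n,u_{n-1},u_n,u_{n+1}) be continuously differentiable and τ_n(t,u_n), φ_n(t,u_n) (n ∈ ℤ) be twice continuously differentiable real functions satisfying the second-order determining equation for Lie point symmetries of the Toda-type equation identically. Then for all n ∈ ℤ and all real values of the jet variables the following relations hold pointwise: (∂f_n/∂u_{n+1})(t,v_n,u_{n-1},u_n,u_{n+1}) · (τ_n(t,u_n) − τ_{n+1}(t,u_{n+1})) = 0 and (∂f_n/∂u_{n-1})(t,v_n,u_{n-1},u_n,u_{n+1}) · (τ_n(t,u_n) − τ_{n-1}(t,u_{n-1})) = 0. -/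
import Mathlib


/-- The second-order determining equation for Lie point symmetries of the Toda-type
equation `üₙ = fₙ(t, u̇ₙ, uₙ₋₁, uₙ, uₙ₊₁)`, with point-symmetry characteristic
`Qₙ = φₙ(t,uₙ) − τₙ(t,uₙ) u̇ₙ`, required to hold identically in the independent
jet variables `t, uₙ₋₁, uₙ, uₙ₊₁, vₙ₋₁, vₙ, vₙ₊₁` (the `v`'s stand for `u̇`).
The arguments of `f n` are `(t, u̇_n, u_{n-1}, u_n, u_{n+1})`. -/
def TodaTypeDetEq (f : ℤ → ℝ → ℝ → ℝ → ℝ → ℝ → ℝ) (τ φ : ℤ → ℝ → ℝ → ℝ) : Prop :=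
  ∀ (n : ℤ) (t um u0 up vm v0 vp : ℝ),
    (deriv (fun z => f n t z um u0 up) v0) *
        (deriv (fun s => φ n s u0) t +
          (deriv (fun z => φ n t z) u0 - deriv (fun s => τ n s u0) t) * v0 -
          deriv (fun z => τ n t z) u0 * v0 ^ 2) +
      ((deriv (fun z => f n t v0 z u0 up) um) *
          (φ (n - 1) t um + (τ n t u0 - τ (n - 1) t um) * vm) +
        (deriv (fun z => f n t v0 um z up) u0) *
          (φ n t u0 + (τ n t u0 - τ n t u0) * v0) +
        (deriv (fun z => f n t v0 um u0 z) up) *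
          (φ (n + 1) t up + (τ n t u0 - τ (n + 1) t up) * vp)) -
      deriv (deriv (fun s => φ n s u0)) t +
      (-2 * deriv (fun s => deriv (fun z => φ n s z) u0) t +
          deriv (deriv (fun s => τ n s u0)) t) * v0 +
      (-deriv (deriv (fun z => φ n t z)) u0 +
          2 * deriv (fun s => deriv (fun z => τ n s z) u0) t) * v0 ^ 2 +
      deriv (deriv (fun z => τ n t z)) u0 * v0 ^ 3 +
      τ n t u0 * deriv (fun s => f n s v0 um u0 up) t +
      (2 * deriv (fun s => τ n s u0) t - deriv (fun z => φ n t z) u0 +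
          3 * deriv (fun z => τ n t z) u0 * v0) * f n t v0 um u0 up = 0


/-- Eq. (3.18): for a Toda-type equation `üₙ = fₙ(t,u̇ₙ,uₙ₋₁,uₙ,uₙ₊₁)`, setting the
coefficients of `u̇ₙ₊₁` and `u̇ₙ₋₁` in the determining equation to zero yields the
pointwise relations `f_{n,u_{n+1}}(τₙ − τₙ₊₁) = 0` and `f_{n,u_{n-1}}(τₙ − τₙ₋₁) = 0`. -/
theorem todaType_tau_relations
    (f : ℤ → ℝ → ℝ → ℝ → ℝ → ℝ → ℝ) (τ φ : ℤ → ℝ → ℝ → ℝ)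
    (hf : ∀ n, ContDiff ℝ 1
      (fun p : ℝ × ℝ × ℝ × ℝ × ℝ => f n p.1 p.2.1 p.2.2.1 p.2.2.2.1 p.2.2.2.2))
    (hτ : ∀ n, ContDiff ℝ 2 (fun p : ℝ × ℝ => τ n p.1 p.2))
    (hφ : ∀ n, ContDiff ℝ 2 (fun p : ℝ × ℝ => φ n p.1 p.2))
    (hdet : TodaTypeDetEq f τ φ) :
    ∀ (n : ℤ) (t v0 um u0 up : ℝ),
      (deriv (fun z => f n t v0 um u0 z) up) * (τ n t u0 - τ (n + 1) t up) = 0 ∧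
      (deriv (fun z => f n t v0 z u0 up) um) * (τ n t u0 - τ (n - 1) t um) = 0 := by
  intro n t v0 um u0 up
  constructor
  · have h1 := hdet n t um u0 up 0 v0 1
    have h0 := hdet n t um u0 up 0 v0 0
    linarith [h1, h0]
  · have h1 := hdet n t um u0 up 1 v0 0
    have h0 := hdet n t um u0 up 0 v0 0
    linarith [h1, h0]
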